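/- Suppose a preference profile satisfies MaxProp, w_n is the woman who is every man's last preference, and man m_n is matched to w_n by the men-proposing DA. Then for each woman w_i with i in {1,...,n-1}, the top preference of w_i is some man m_j with j != n, and w_i is the second-to-last (penultimate) preference of that man m_j. -/

import Mathlib

open scoped Classical

noncomputable section

/-- A two-sided matching market with `n` men and `n` women, each with a complete
strict preference order over the other side. `mpref m k` is man `m`'s `k`-th
favourite woman (0 = top), and `wpref w k` is woman `w`'s `k`-th favourite man. -/
structure Profile (n : ℕ) where
  mpref : Fin n → (Fin n ≃ Fin n)
  wpref : Fin n → (Fin n ≃ Fin n)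

namespace Profile

variable {n : ℕ}

/-- rank (0 = best) of woman `w` in man `m`'s preference list -/
def mrank (P : Profile n) (m w : Fin n) : ℕ := ((P.mpref m).symm w : ℕ)

/-- rank (0 = best) of man `m` in woman `w`'s preference list -/
def wrank (P : Profile n) (w m : Fin n) : ℕ := ((P.wpref w).symm m : ℕ)

/-- man `m` strictly prefers woman `w` to woman `w'` -/
def mPrefers (P : Profile n) (m w w' : Fin n) : Prop := P.mrank m w < P.mrank m w'

/-- woman `w` strictly prefers man `m` to man `m'` -/
def wPrefers (P : Profile n) (w m m' : Fin n) : Prop := P.wrank w m < P.wrank w m'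

/-- top choice of man `m` -/
def topM (P : Profile n) (m : Fin n) : Fin n := P.mpref m ⟨0, m.pos⟩

/-- top choice of woman `w` -/
def topW (P : Profile n) (w : Fin n) : Fin n := P.wpref w ⟨0, w.pos⟩

/-- the profile with the roles of men and women exchanged -/
def swap (P : Profile n) : Profile n := ⟨P.wpref, P.mpref⟩

/-- State of the men-proposing deferred acceptance algorithm:
`next m` = number of proposals man `m` has made so far,
`held w` = the man woman `w` currently tentatively holds (if any). -/
structure DAState (n : ℕ) where
  next : Fin n → ℕ
  held : Fin n → Option (Fin n)

def initState (n : ℕ) : DAState n := ⟨fun _ => 0, fun _ => none⟩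

/-- the men currently unmatched (held by no woman) -/
def unmatched (s : DAState n) : Finset (Fin n) :=
  Finset.univ.filter fun m => ∀ w : Fin n, s.held w ≠ some m

/-- the woman man `m` proposes to next: his most preferred woman among those
who have not rejected him yet -/
def target (P : Profile n) (s : DAState n) (m : Fin n) : Fin n :=
  P.mpref m ⟨s.next m % n, Nat.mod_lt _ m.pos⟩

/-- the men proposing to woman `w` in the current round -/
def proposers (P : Profile n) (s : DAState n) (w : Fin n) : Finset (Fin n) :=
  (unmatched s).filter fun m => target P s m = w

/-- one round of the men-proposing deferred acceptance algorithm: every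
unmatched man proposes to his favourite woman who has not rejected him yet,
and every woman tentatively holds her favourite among her current partner
and the new proposers, rejecting the rest -/
def step (P : Profile n) (s : DAState n) : DAState n where
  next := fun m => if m ∈ unmatched s then s.next m + 1 else s.next m
  held := fun w => ((proposers P s w ∪ (s.held w).toFinset).toList).argmin (P.wrank w)

/-- the state after `k` rounds of men-proposing deferred acceptance -/
def stateAt (P : Profile n) (k : ℕ) : DAState n := (step P)^[k] (initState n)

/-- the final state of men-proposing deferred acceptance
(`n * n + 1` iterations is always enough to reach the fixed point) -/
def finalState (P : Profile n) : DAState n := stateAt P (n * n + 1)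

/-- total number of proposals made during the men-proposing DA -/
def totalProposals (P : Profile n) : ℕ := ∑ m : Fin n, (finalState P).next m

/-- number of rounds of the men-proposing DA (rounds in which some proposal is made) -/
def rounds (P : Profile n) : ℕ :=
  ((Finset.range (n * n + 1)).filter fun k => (unmatched (stateAt P k)).Nonempty).card

/-- total number of proposals received by woman `w` during the men-proposing DA -/
def proposalsTo (P : Profile n) (w : Fin n) : ℕ :=
  ∑ k ∈ Finset.range (n * n + 1), (proposers P (stateAt P k) w).card

/-- man `m` proposes to woman `w` at some point during the men-proposing DA -/
def proposedTo (P : Profile n) (m w : Fin n) : Prop :=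
  ∃ k < n * n + 1, m ∈ proposers P (stateAt P k) w

/-- the men-proposing DA makes the maximum possible number `n² - n + 1` of proposals -/
def MaxProp (P : Profile n) : Prop := P.totalProposals = n * n + 1 - n

/-- the men-proposing DA takes the maximum possible number `n² - 2n + 2` of rounds -/
def MaxRou (P : Profile n) : Prop := P.rounds = n * n + 2 - 2 * n

/-- a matching (a bijection man ↦ woman) is stable iff no man-woman pair mutually
prefer each other to their assigned partners -/
def Stable (P : Profile n) (μ : Fin n ≃ Fin n) : Prop :=
  ¬ ∃ (m w : Fin n), P.mPrefers m w (μ m) ∧ P.wPrefers w m (μ.symm w)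

/-- the profile admits a unique stable matching -/
def USM (P : Profile n) : Prop := ∃! μ : Fin n ≃ Fin n, P.Stable μ

/-- the sequential preference condition of Eeckhout (2000) -/
def SPC (P : Profile n) : Prop :=
  ∃ σ τ : Equiv.Perm (Fin n), ∀ i j : Fin n, i < j →
    P.mPrefers (σ i) (τ i) (τ j) ∧ P.wPrefers (τ i) (σ i) (σ j)

/-- the no crossing condition of Clark (2006) -/
def NCC (P : Profile n) : Prop :=
  ∃ σ τ : Equiv.Perm (Fin n), ∀ i j k l : Fin n, i < j → k < l →
    (P.mPrefers (σ i) (τ l) (τ k) → P.mPrefers (σ j) (τ l) (τ k)) ∧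
    (P.wPrefers (τ k) (σ j) (σ i) → P.wPrefers (τ l) (σ j) (σ i))

/-! ### Auxiliary lemmas -/

lemma mem_unmatched {s : DAState n} {m : Fin n} :
    m ∈ unmatched s ↔ ∀ w : Fin n, s.held w ≠ some m := by
  simp [unmatched]

lemma mem_proposers {P : Profile n} {s : DAState n} {m w : Fin n} :
    m ∈ proposers P s w ↔ m ∈ unmatched s ∧ target P s m = w := by
  simp [proposers, Finset.mem_filter]

/-- The grand invariant of the DA algorithm:
(1) no man is held by two women,
(2) a held man's `next` counter is one more than the rank of his holder,
(3) any woman who has been proposed to holds a man at least as good as every proposer. -/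
def Inv (P : Profile n) (s : DAState n) : Prop :=
  (∀ m w w', s.held w = some m → s.held w' = some m → w = w') ∧
  (∀ m w, s.held w = some m → s.next m = P.mrank m w + 1) ∧
  (∀ w m, P.mrank m w < s.next m →
    ∃ m1, s.held w = some m1 ∧ P.wrank w m1 ≤ P.wrank w m)

lemma next_lt_of_unmatched {P : Profile n} {s : DAState n} (hI : Inv P s) {m : Fin n}
    (hm : m ∈ unmatched s) : s.next m < n := by
  by_contra hc
  push_neg at hc
  have hall : ∀ w : Fin n, ∃ m1, s.held w = some m1 := by
    intro w
    obtain ⟨m1, h1, -⟩ := hI.2.2 w m (lt_of_lt_of_le ((P.mpref m).symm w).isLt hc)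
    exact ⟨m1, h1⟩
  choose f hf using hall
  have hinj : Function.Injective f := fun w w' hww' =>
    hI.1 (f w) w w' (hf w) (by rw [hww']; exact hf w')
  have hsurj : Function.Surjective f := Finite.surjective_of_injective hinj
  obtain ⟨w, hw⟩ := hsurj m
  exact (mem_unmatched.mp hm w) (by rw [← hw]; exact hf w)

lemma next_le (P : Profile n) {s : DAState n} (hI : Inv P s) (m : Fin n) :
    s.next m ≤ n := by
  by_cases hm : m ∈ unmatched s
  · exact le_of_lt (next_lt_of_unmatched hI hm)
  · rw [mem_unmatched] at hm
    push_neg at hm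
    obtain ⟨w, hw⟩ := hm
    rw [hI.2.1 m w hw]
    exact Nat.succ_le_of_lt ((P.mpref m).symm w).isLt

lemma mrank_of_mem_proposers {P : Profile n} {s : DAState n} (hI : Inv P s) {m w : Fin n}
    (h : m ∈ proposers P s w) : P.mrank m w = s.next m := by
  rw [mem_proposers] at h
  have hlt : s.next m < n := next_lt_of_unmatched hI h.1
  have : target P s m = P.mpref m ⟨s.next m, hlt⟩ := by
    unfold target
    congr 1
    exact Fin.ext (Nat.mod_eq_of_lt hlt)
  rw [this] at h
  rw [mrank, ← h.2, Equiv.symm_apply_apply]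

lemma mem_proposers_of_rank {P : Profile n} {s : DAState n} (hI : Inv P s) {m w : Fin n}
    (hm : m ∈ unmatched s) (h : P.mrank m w = s.next m) : m ∈ proposers P s w := by
  rw [mem_proposers]
  refine ⟨hm, ?_⟩
  have hlt : s.next m < n := next_lt_of_unmatched hI hm
  have h1 : target P s m = P.mpref m ⟨s.next m, hlt⟩ := by
    unfold target
    congr 1
    exact Fin.ext (Nat.mod_eq_of_lt hlt)
  rw [h1]
  have h4 : (⟨s.next m, hlt⟩ : Fin n) = (P.mpref m).symm w := Fin.ext h.symm
  rw [h4, Equiv.apply_symm_apply]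

lemma step_held_le (P : Profile n) {s : DAState n} {w m1 : Fin n}
    (h : m1 ∈ proposers P s w ∪ (s.held w).toFinset) :
    ∃ m2, (step P s).held w = some m2 ∧ P.wrank w m2 ≤ P.wrank w m1 := by
  have hmem : m1 ∈ (proposers P s w ∪ (s.held w).toFinset).toList := Finset.mem_toList.2 h
  cases hl : ((proposers P s w ∪ (s.held w).toFinset).toList).argmin (P.wrank w) with
  | none =>
    rw [List.argmin_eq_none] at hl
    rw [hl] at hmem
    exact absurd hmem List.not_mem_nil
  | some m2 =>
    exact ⟨m2, hl, List.le_of_mem_argmin hmem (Option.mem_def.2 hl)⟩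

lemma step_held_cases (P : Profile n) {s : DAState n} {w m : Fin n}
    (h : (step P s).held w = some m) :
    m ∈ proposers P s w ∨ s.held w = some m := by
  have hmem : m ∈ (proposers P s w ∪ (s.held w).toFinset).toList :=
    List.argmin_mem (f := P.wrank w) (Option.mem_def.2 h)
  rw [Finset.mem_toList, Finset.mem_union] at hmem
  rcases hmem with h' | h'
  · exact Or.inl h'
  · exact Or.inr (Option.mem_def.1 (Option.mem_toFinset.1 h'))

lemma inv_step (P : Profile n) {s : DAState n} (hI : Inv P s) : Inv P (step P s) := by
  obtain ⟨h1, h2, h3⟩ := hI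
  have hI' : Inv P s := ⟨h1, h2, h3⟩
  refine ⟨?_, ?_, ?_⟩
  · -- injectivity
    intro m w w' hw hw'
    rcases step_held_cases P hw with hp | hp <;> rcases step_held_cases P hw' with hp' | hp'
    · rw [mem_proposers] at hp hp'
      rw [← hp.2, ← hp'.2]
    · exact absurd hp' ((mem_unmatched.1 (mem_proposers.1 hp).1) w')
    · exact absurd hp ((mem_unmatched.1 (mem_proposers.1 hp').1) w)
    · exact h1 m w w' hp hp'
  · -- next = mrank + 1
    intro m w hw
    rcases step_held_cases P hw with hp | hp
    · have hu : m ∈ unmatched s := (mem_proposers.1 hp).1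
      have : (step P s).next m = s.next m + 1 := by simp [step, hu]
      rw [this, mrank_of_mem_proposers hI' hp]
    · have hu : m ∉ unmatched s := by
        rw [mem_unmatched]
        push_neg
        exact ⟨w, hp⟩
      have : (step P s).next m = s.next m := by simp [step, hu]
      rw [this, h2 m w hp]
  · -- dominance
    intro w m hlt
    have key : ∀ m1, m1 ∈ proposers P s w ∪ (s.held w).toFinset →
        P.wrank w m1 ≤ P.wrank w m →
        ∃ m2, (step P s).held w = some m2 ∧ P.wrank w m2 ≤ P.wrank w m := by
      intro m1 hm1 hle
      obtain ⟨m2, hm2, hle2⟩ := step_held_le P hm1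
      exact ⟨m2, hm2, le_trans hle2 hle⟩
    by_cases hu : m ∈ unmatched s
    · have hnext : (step P s).next m = s.next m + 1 := by simp [step, hu]
      rw [hnext] at hlt
      rcases Nat.lt_or_ge (P.mrank m w) (s.next m) with hlt' | hge
      · obtain ⟨m1, hm1, hle1⟩ := h3 w m hlt'
        exact key m1 (Finset.mem_union_right _ (Option.mem_toFinset.2 hm1)) hle1
      · have heq : P.mrank m w = s.next m := le_antisymm (by omega) hge
        exact key m (Finset.mem_union_left _ (mem_proposers_of_rank hI' hu heq)) le_rfl
    · have hnext : (step P s).next m = s.next m := by simp [step, hu]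
      rw [hnext] at hlt
      obtain ⟨m1, hm1, hle1⟩ := h3 w m hlt
      exact key m1 (Finset.mem_union_right _ (Option.mem_toFinset.2 hm1)) hle1

lemma inv_stateAt (P : Profile n) : ∀ k, Inv P (stateAt P k)
  | 0 => by
    refine ⟨?_, ?_, ?_⟩
    · intro m w w' hw
      simp [stateAt, initState] at hw
    · intro m w hw
      simp [stateAt, initState] at hw
    · intro w m hlt
      simp [stateAt, initState] at hlt
  | (k + 1) => by
    have : stateAt P (k + 1) = step P (stateAt P k) := by
      simp [stateAt, Function.iterate_succ_apply']
    rw [this]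
    exact inv_step P (inv_stateAt P k)

lemma inv_final (P : Profile n) : Inv P (P.finalState) := inv_stateAt P _

/-- the rank of the universally-last woman `wn` is `n - 1` for every man -/
lemma mrank_last {P : Profile n} {wn : Fin n}
    (hwn : ∀ m w' : Fin n, w' ≠ wn → P.mPrefers m w' wn) (m : Fin n) :
    P.mrank m wn = n - 1 := by
  have hn : 0 < n := m.pos
  set w' := P.mpref m ⟨n - 1, by omega⟩ with hw'
  by_cases hw : w' = wn
  · rw [← hw, mrank, hw', Equiv.symm_apply_apply]
  · have h1 := hwn m w' hw
    have h2 : P.mrank m w' = n - 1 := by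
      rw [mrank, hw', Equiv.symm_apply_apply]
    have h3 : P.mrank m wn < n := ((P.mpref m).symm wn).isLt
    rw [mPrefers, h2] at h1
    omega

lemma card_mrank_lt (P : Profile n) (m : Fin n) {t : ℕ} (ht : t ≤ n) :
    (Finset.univ.filter fun w : Fin n => P.mrank m w < t).card = t := by
  have himg : (Finset.univ.filter fun w : Fin n => P.mrank m w < t)
      = (Finset.univ.filter fun i : Fin n => (i : ℕ) < t).map (P.mpref m).toEmbedding := by
    ext w
    simp only [Finset.mem_filter, Finset.mem_univ, true_and, Finset.mem_map,
      Equiv.coe_toEmbedding]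
    constructor
    · intro hlt
      exact ⟨(P.mpref m).symm w, hlt, Equiv.apply_symm_apply _ _⟩
    · rintro ⟨i, hi, rfl⟩
      rwa [mrank, Equiv.symm_apply_apply]
  rw [himg, Finset.card_map]
  have : (Finset.univ.filter fun i : Fin n => (i : ℕ) < t)
      = (Finset.range t).attachFin (fun m hm => lt_of_lt_of_le (Finset.mem_range.1 hm) ht) := by
    ext i
    simp [Finset.mem_attachFin]
  rw [this, Finset.card_attachFin, Finset.card_range]

end Profile

/-- Under MaxProp, if `wn` is every man's last preference and the DA matches
`mn` to `wn`, then every other woman's top choice is a man `≠ mn` whose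
penultimate preference is that woman. -/
theorem maxProp_top_and_penultimate (n : ℕ) (P : Profile n) (h : P.MaxProp)
    (wn : Fin n) (hwn : ∀ m w' : Fin n, w' ≠ wn → P.mPrefers m w' wn)
    (mn : Fin n) (hmn : (P.finalState).held wn = some mn) :
    ∀ w : Fin n, w ≠ wn → P.topW w ≠ mn ∧ P.mrank (P.topW w) w = n - 2 := by
  intro w hw
  classical
  obtain ⟨h1, h2, h3⟩ := P.inv_final
  have hIF : P.Inv P.finalState := ⟨h1, h2, h3⟩
  have hn : 0 < n := w.pos
  have hn2 : 2 ≤ n := by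
    rcases Nat.lt_or_ge n 2 with hlt | hge
    · exact absurd (Fin.ext (by omega : (w : ℕ) = (wn : ℕ))) hw
    · exact hge
  set F := P.finalState with hF
  set S : Fin n → Finset (Fin n) :=
    fun w' => Finset.univ.filter fun m => P.mrank m w' < F.next m with hS
  have hnext_le : ∀ m, F.next m ≤ n := fun m => P.next_le hIF m
  -- S wn = {mn}
  have hSwn : S wn = {mn} := by
    ext m
    simp only [hS, Finset.mem_filter, Finset.mem_univ, true_and, Finset.mem_singleton]
    constructor
    · intro hlt
      have hr : P.mrank m wn = n - 1 := Profile.mrank_last hwn m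
      have hnm : F.next m = n := by
        have := hnext_le m
        omega
      have hmatched : m ∉ Profile.unmatched F := by
        intro hu
        have := Profile.next_lt_of_unmatched hIF hu
        omega
      rw [Profile.mem_unmatched] at hmatched
      push_neg at hmatched
      obtain ⟨w', hw'⟩ := hmatched
      have h4 : F.next m = P.mrank m w' + 1 := h2 m w' hw'
      have h5 : P.mrank m w' = n - 1 := by omega
      have hww : w' = wn := by
        have : (P.mpref m).symm w' = (P.mpref m).symm wn := Fin.ext (by
          show P.mrank m w' = P.mrank m wn
          rw [h5, hr])
        exact (P.mpref m).symm.injective this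
      rw [hww] at hw'
      rw [hw'] at hmn
      exact Option.some.inj hmn
    · rintro rfl
      rw [h2 m wn hmn]
      omega
  -- total count
  have hsum : ∑ w' : Fin n, (S w').card = n * n + 1 - n := by
    have hswap : ∑ w' : Fin n, (S w').card = ∑ m : Fin n, F.next m := by
      have e1 : ∀ w' : Fin n, (S w').card
          = ∑ m : Fin n, if P.mrank m w' < F.next m then 1 else 0 := by
        intro w'
        rw [hS]
        rw [Finset.card_filter]
      simp only [e1]
      rw [Finset.sum_comm]
      congr 1
      ext m
      rw [← Finset.card_filter]
      exact P.card_mrank_lt m (hnext_le m)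
    rw [hswap]
    exact h
  -- every woman other than wn receives proposals from everyone
  have hSuniv : ∀ w' : Fin n, w' ≠ wn → ∀ m : Fin n, P.mrank m w' < F.next m := by
    have hcard_le : ∀ w' : Fin n, (S w').card ≤ n := by
      intro w'
      calc (S w').card ≤ Finset.univ.card := Finset.card_filter_le _ _
        _ = n := by rw [Finset.card_univ, Fintype.card_fin]
    have herase : ∑ w' ∈ Finset.univ.erase wn, (S w').card = n * n - n := by
      have := Finset.add_sum_erase Finset.univ (fun w' => (S w').card)
        (Finset.mem_univ wn)
      simp only [hSwn, Finset.card_singleton] at this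
      obtain ⟨a, ha⟩ : ∃ a, n * n = a := ⟨n * n, rfl⟩
      rw [ha] at hsum ⊢
      omega
    have hall : ∀ w' ∈ Finset.univ.erase wn, (S w').card = n := by
      by_contra hc
      push_neg at hc
      obtain ⟨w0, hw0, hne0⟩ := hc
      have hlt : ∑ w' ∈ Finset.univ.erase wn, (S w').card
          < ∑ _w' ∈ Finset.univ.erase wn, n := by
        refine Finset.sum_lt_sum (fun i _ => hcard_le i) ⟨w0, hw0, ?_⟩
        exact lt_of_le_of_ne (hcard_le w0) hne0
      rw [Finset.sum_const, smul_eq_mul,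
        Finset.card_erase_of_mem (Finset.mem_univ wn), Finset.card_univ,
        Fintype.card_fin, herase] at hlt
      obtain ⟨a, ha⟩ : ∃ a, n * n = a := ⟨n * n, rfl⟩
      rw [ha] at hlt
      rw [Nat.sub_mul, one_mul, ha] at hlt
      omega
    intro w' hw' m
    have hcard : (S w').card = n := hall w' (Finset.mem_erase.2 ⟨hw', Finset.mem_univ w'⟩)
    have huniv : S w' = Finset.univ := by
      apply Finset.eq_univ_of_card
      rw [hcard, Fintype.card_fin]
    have : m ∈ S w' := huniv ▸ Finset.mem_univ m
    simpa [hS] using this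
  -- w's final partner is her top choice
  obtain ⟨m1, hheld, -⟩ := h3 w (P.topW w) (hSuniv w hw (P.topW w))
  have hbest : ∀ m : Fin n, P.wrank w m1 ≤ P.wrank w m := by
    intro m
    obtain ⟨m1', hheld', hle⟩ := h3 w m (hSuniv w hw m)
    rw [hheld] at hheld'
    exact (Option.some.inj hheld') ▸ hle
  have hm1top : m1 = P.topW w := by
    have h0 : P.wrank w (P.topW w) = 0 := by
      rw [Profile.wrank, Profile.topW, Equiv.symm_apply_apply]
    have : P.wrank w m1 = 0 := Nat.le_antisymm (h0 ▸ hbest (P.topW w)) (Nat.zero_le _)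
    have hval : (P.wpref w).symm m1 = (⟨0, w.pos⟩ : Fin n) := Fin.ext this
    calc m1 = P.wpref w ((P.wpref w).symm m1) := (Equiv.apply_symm_apply _ _).symm
      _ = P.topW w := by rw [hval]; rfl
  rw [hm1top] at hheld
  -- top choice of w is not mn
  have htopne : P.topW w ≠ mn := by
    intro heq
    rw [heq] at hheld
    exact hw (h1 mn w wn hheld hmn)
  refine ⟨htopne, ?_⟩
  -- the penultimate rank
  have hnext_top : F.next (P.topW w) = P.mrank (P.topW w) w + 1 := h2 _ w hheld
  have hnotS : P.topW w ∉ S wn := by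
    rw [hSwn, Finset.mem_singleton]
    exact htopne
  have hub : F.next (P.topW w) ≤ n - 1 := by
    simp only [hS, Finset.mem_filter, Finset.mem_univ, true_and, not_lt] at hnotS
    rwa [Profile.mrank_last hwn] at hnotS
  set w2 : Fin n := P.mpref (P.topW w) ⟨n - 2, by omega⟩ with hw2
  have hr2 : P.mrank (P.topW w) w2 = n - 2 := by
    rw [Profile.mrank, hw2, Equiv.symm_apply_apply]
  have hw2ne : w2 ≠ wn := by
    intro heq
    have := Profile.mrank_last hwn (P.topW w)
    rw [← heq, hr2] at this
    omega
  have hlb : n - 2 < F.next (P.topW w) := hr2 ▸ hSuniv w2 hw2ne (P.topW w)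
  omega
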